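/- Let V be a Gel'fand–Dorfman bialgebra over ℂ, let n > 3 be a natural number, and let d^0,…,d^n be linear maps from V into the space of polynomial maps ℂ → V (write d^i_λ(a) ∈ V for the value at λ ∈ ℂ) satisfying the conformal derivation equation (E). Then d^n_λ(b)∘a = 0 and a∘d^n_λ(b) = 0 for all a, b ∈ V and all λ ∈ ℂ. -/

import Mathlib

open Finset Polynomial

lemma ext1 (N : ℕ) (c : ℕ → ℂ) (h : ∀ t : ℂ, ∑ j ∈ range N, t ^ j * c j = 0) :
    ∀ j, j < N → c j = 0 := by
  intro j hj
  have hp : (∑ j ∈ range N, Polynomial.C (c j) * Polynomial.X ^ j : ℂ[X]) = 0 := by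
    apply Polynomial.funext
    intro t
    simp only [eval_finset_sum, eval_mul, eval_C, eval_pow, eval_X, eval_zero]
    rw [← h t]
    exact Finset.sum_congr rfl fun i _ => mul_comm _ _
  have := congrArg (fun q : ℂ[X] => q.coeff j) hp
  simp only [finset_sum_coeff, coeff_C_mul, coeff_X_pow, coeff_zero, mul_ite, mul_one,
    mul_zero] at this
  rwa [Finset.sum_ite_eq (range N) j c, if_pos (Finset.mem_range.2 hj)] at this

lemma sum_pow_repr (N : ℕ) (g : ℕ → ℂ) (r m : ℂ) :
    ∑ i ∈ range N, (r + m) ^ i * g i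
      = ∑ j ∈ range N, m ^ j * ∑ i ∈ range N, (i.choose j : ℂ) * r ^ (i - j) * g i := by
  have h1 : ∀ i ∈ range N, (r + m) ^ i * g i
      = ∑ j ∈ range N, m ^ j * ((i.choose j : ℂ) * r ^ (i - j) * g i) := by
    intro i hi
    rw [add_comm r m, add_pow, Finset.sum_mul]
    refine Finset.sum_subset (Finset.range_subset_range.2 (Finset.mem_range.1 hi)) ?_ |>.trans ?_
    · intro j _ hj
      have : i < j := by simpa using hj
      simp [Nat.choose_eq_zero_of_lt this]
    · exact Finset.sum_congr rfl fun j _ => by ring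
  rw [Finset.sum_congr rfl h1, Finset.sum_comm]
  exact Finset.sum_congr rfl fun j _ => by rw [Finset.mul_sum]

lemma sum_shift (N j : ℕ) (g : ℕ → ℂ) (hg : ∀ i, N ≤ i → g i = 0)
    (hg0 : ∀ i, i < j → g i = 0) (x : ℂ) :
    ∑ i ∈ range N, g i * x ^ (i - j) = ∑ k ∈ range N, g (k + j) * x ^ k := by
  have h1 : ∑ i ∈ range N, g i * x ^ (i - j)
      = ∑ i ∈ range (j + N), g i * x ^ (i - j) := by
    refine Finset.sum_subset (Finset.range_subset_range.2 (Nat.le_add_left N j)) ?_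
    intro i _ hi
    have : N ≤ i := by simpa using hi
    simp [hg i this]
  rw [h1, Finset.sum_range_add]
  have h2 : ∑ i ∈ range j, g i * x ^ (i - j) = 0 :=
    Finset.sum_eq_zero fun i hi => by simp [hg0 i (Finset.mem_range.1 hi)]
  rw [h2, zero_add]
  exact Finset.sum_congr rfl fun k _ => by rw [add_comm j k, Nat.add_sub_cancel]

lemma sum_ite_shift2 (N : ℕ) (m : ℂ) (g h : ℕ → ℂ) :
    ∑ j ∈ range (N + 1), (if j = 0 then 0 else m ^ j * g (j - 1) + m ^ j * h (j - 1))
      = m * (∑ j ∈ range N, m ^ j * g j) + m * ∑ j ∈ range N, m ^ j * h j := by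
  rw [Finset.sum_range_succ', if_pos rfl, add_zero, Finset.mul_sum, Finset.mul_sum,
    ← Finset.sum_add_distrib]
  refine Finset.sum_congr rfl fun j _ => ?_
  rw [if_neg (Nat.succ_ne_zero j), Nat.add_sub_cancel]
  ring

lemma sum_ite_two (N : ℕ) (hN : 2 ≤ N) (m A0 A1 : ℂ) :
    ∑ j ∈ range N, (if j = 0 then m ^ j * A0 else if j = 1 then m ^ j * A1 else 0)
      = A0 + m * A1 := by
  induction N with
  | zero => omega
  | succ k ih =>
    rcases Nat.lt_or_ge k 2 with hk | hk
    · have : k = 1 := by omega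
      subst this
      norm_num [Finset.sum_range_succ]
    · rw [Finset.sum_range_succ, ih hk, if_neg (by omega), if_neg (by omega), add_zero]

lemma gather (N : ℕ) (hN : 2 ≤ N) (b1 b2 g1 g2 : ℕ → ℂ) (A0 A1 m : ℂ)
    (hb : b1 N + b2 N = 0) :
    ∑ j ∈ range (N + 1), m ^ j *
      ((b1 j + b2 j) + (if j = 0 then 0 else g1 (j - 1) + g2 (j - 1))
        - (if j = 0 then A0 else if j = 1 then A1 else 0))
      = ((∑ j ∈ range N, m ^ j * b1 j) + ∑ j ∈ range N, m ^ j * b2 j)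
        + (m * (∑ j ∈ range N, m ^ j * g1 j) + m * ∑ j ∈ range N, m ^ j * g2 j)
        - (A0 + m * A1) := by
  have d1 : ∀ j, m ^ j *
      ((b1 j + b2 j) + (if j = 0 then 0 else g1 (j - 1) + g2 (j - 1))
        - (if j = 0 then A0 else if j = 1 then A1 else 0))
      = (m ^ j * b1 j + m ^ j * b2 j)
        + (if j = 0 then 0 else m ^ j * g1 (j - 1) + m ^ j * g2 (j - 1))
        - (if j = 0 then m ^ j * A0 else if j = 1 then m ^ j * A1 else 0) := by
    intro j
    split_ifs <;> ring
  rw [Finset.sum_congr rfl fun j _ => d1 j, Finset.sum_sub_distrib,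
    Finset.sum_add_distrib, Finset.sum_add_distrib, sum_ite_shift2 N m g1 g2,
    sum_ite_two (N + 1) (by omega) m A0 A1,
    Finset.sum_range_succ (fun j => m ^ j * b1 j),
    Finset.sum_range_succ (fun j => m ^ j * b2 j)]
  linear_combination (m ^ N) * hb

lemma gather2 (N : ℕ) (hN : 2 ≤ N) (g1 g2 g3 : ℕ → ℂ) (K0 K1 x : ℂ) :
    ∑ k ∈ range N, x ^ k *
      (g1 k + g2 k + g3 k + (if k = 1 then K1 else 0) + (if k = 0 then K0 else 0))
      = ((∑ k ∈ range N, g1 k * x ^ k) + ∑ k ∈ range N, g2 k * x ^ k)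
        + (∑ k ∈ range N, g3 k * x ^ k) + x * K1 + K0 := by
  have d1 : ∀ k, x ^ k *
      (g1 k + g2 k + g3 k + (if k = 1 then K1 else 0) + (if k = 0 then K0 else 0))
      = (g1 k * x ^ k + g2 k * x ^ k) + g3 k * x ^ k
        + (if k = 1 then x ^ k * K1 else 0) + (if k = 0 then x ^ k * K0 else 0) := by
    intro k
    split_ifs <;> ring
  rw [Finset.sum_congr rfl fun k _ => d1 k, Finset.sum_add_distrib,
    Finset.sum_add_distrib, Finset.sum_add_distrib, Finset.sum_add_distrib,
    Finset.sum_ite_eq' (range N) 1 (fun k => x ^ k * K1),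
    Finset.sum_ite_eq' (range N) 0 (fun k => x ^ k * K0),
    if_pos (Finset.mem_range.2 (by omega)), if_pos (Finset.mem_range.2 (by omega))]
  ring



/-- The conformal derivation equation (E) for a family `d^0, …, d^n` of linear maps
from `V` into maps `ℂ → V`, on the quadratic Lie conformal algebra of the
Gel'fand–Dorfman bialgebra `(V, circ, br)`; the formal variable `∂` is evaluated
at `x : ℂ`. -/
def ConfDerEq {V : Type*} [AddCommGroup V] [Module ℂ V]
    (circ br : V →ₗ[ℂ] V →ₗ[ℂ] V) (n : ℕ) (d : ℕ → V →ₗ[ℂ] (ℂ → V)) : Prop :=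
  ∀ (a b : V) (l m x : ℂ),
    (x + l) • (∑ i ∈ Finset.range (n + 1), x ^ i • d i (circ b a) l)
      + m • (∑ i ∈ Finset.range (n + 1), x ^ i • d i (circ a b + circ b a) l)
      + (∑ i ∈ Finset.range (n + 1), x ^ i • d i (br b a) l)
    = (∑ i ∈ Finset.range (n + 1), (-l - m) ^ i •
        (x • circ b (d i a l) + (l + m) • (circ (d i a l) b + circ b (d i a l))
          + br b (d i a l)))
      + (∑ i ∈ Finset.range (n + 1), (m + x) ^ i •
        (x • circ (d i b l) a + m • (circ (d i b l) a + circ a (d i b l))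
          + br (d i b l) a))

/-- Let `V` be a Gel'fand–Dorfman bialgebra over `ℂ`, `n > 3`, and
`d^0, …, d^n` linear maps from `V` into the space of polynomial maps `ℂ → V`
satisfying the conformal derivation equation (E).  Then `d^n_λ(b)∘a = 0` and
`a∘d^n_λ(b) = 0` for all `a, b ∈ V` and all `λ ∈ ℂ`. -/
theorem stmt_9 {V : Type*} [AddCommGroup V] [Module ℂ V]
    (circ br : V →ₗ[ℂ] V →ₗ[ℂ] V)
    -- Novikov algebra axioms for `∘ = circ`
    (hNov1 : ∀ a b c : V, circ (circ a b) c - circ a (circ b c)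
      = circ (circ b a) c - circ b (circ a c))
    (hNov2 : ∀ a b c : V, circ (circ a b) c = circ (circ a c) b)
    -- Lie algebra axioms for `[·,·] = br`
    (hSkew : ∀ a b : V, br a b = - br b a)
    (hJacobi : ∀ a b c : V, br (br a b) c + br (br b c) a + br (br c a) b = 0)
    -- compatibility condition of the Gel'fand–Dorfman bialgebra
    (hCompat : ∀ a b c : V, br (circ a b) c - br (circ a c) b + circ (br a b) c
      - circ (br a c) b - circ a (br b c) = 0)
    (n : ℕ) (hn : 3 < n)
    (d : ℕ → V →ₗ[ℂ] (ℂ → V))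
    -- the family consists only of `d^0, …, d^n`
    (hd : ∀ i : ℕ, n < i → d i = 0)
    -- each `d^i(a)` is a polynomial map `ℂ → V`
    (hpoly : ∀ (i : ℕ) (a : V), ∃ (N : ℕ) (v : ℕ → V),
      ∀ t : ℂ, d i a t = ∑ j ∈ Finset.range N, t ^ j • v j)
    (hE : ConfDerEq circ br n d) :
    ∀ (a b : V) (l : ℂ), circ (d n b l) a = 0 ∧ circ a (d n b l) = 0 := by
  intro a b l
  obtain ⟨nn, rfl⟩ : ∃ m, n = m + 4 := ⟨n - 4, by omega⟩
  have key : ∀ f : Module.Dual ℂ V,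
      f (circ (d (nn + 4) b l) a) = 0 ∧ f (circ a (d (nn + 4) b l)) = 0 := by
    intro f
    obtain ⟨S, hS⟩ : ∃ g : ℕ → ℂ, ∀ i, f (d i (circ b a) l) = g i := ⟨_, fun i => rfl⟩
    obtain ⟨S1, hS1⟩ : ∃ g : ℕ → ℂ, ∀ i, f (d i (circ a b) l) = g i := ⟨_, fun i => rfl⟩
    obtain ⟨Q, hQ⟩ : ∃ g : ℕ → ℂ, ∀ i, f (d i (br b a) l) = g i := ⟨_, fun i => rfl⟩
    obtain ⟨U, hU⟩ : ∃ g : ℕ → ℂ, ∀ i, f (circ b (d i a l)) = g i := ⟨_, fun i => rfl⟩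
    obtain ⟨W2, hW2⟩ : ∃ g : ℕ → ℂ, ∀ i, f (circ (d i a l) b) = g i := ⟨_, fun i => rfl⟩
    obtain ⟨Z, hZ⟩ : ∃ g : ℕ → ℂ, ∀ i, f (br b (d i a l)) = g i := ⟨_, fun i => rfl⟩
    obtain ⟨U', hU'⟩ : ∃ g : ℕ → ℂ, ∀ i, f (circ (d i b l) a) = g i := ⟨_, fun i => rfl⟩
    obtain ⟨V', hV'⟩ : ∃ g : ℕ → ℂ, ∀ i, f (circ a (d i b l)) = g i := ⟨_, fun i => rfl⟩
    obtain ⟨Z', hZ'⟩ : ∃ g : ℕ → ℂ, ∀ i, f (br (d i b l) a) = g i := ⟨_, fun i => rfl⟩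
    have hvan : ∀ i, nn + 4 < i → S i = 0 ∧ S1 i = 0 ∧ Q i = 0 ∧ U i = 0 ∧ W2 i = 0
        ∧ Z i = 0 ∧ U' i = 0 ∧ V' i = 0 ∧ Z' i = 0 := by
      intro i hi
      refine ⟨?_, ?_, ?_, ?_, ?_, ?_, ?_, ?_, ?_⟩ <;>
        simp [← hS i, ← hS1 i, ← hQ i, ← hU i, ← hW2 i, ← hZ i, ← hU' i, ← hV' i, ← hZ' i,
          hd i hi]
    have H : ∀ m x : ℂ,
        (x + l) * (∑ i ∈ range (nn + 5), x ^ i * S i)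
          + m * (∑ i ∈ range (nn + 5), x ^ i * (S1 i + S i))
          + (∑ i ∈ range (nn + 5), x ^ i * Q i)
        = (∑ i ∈ range (nn + 5), (-l - m) ^ i
            * (x * U i + (l + m) * (W2 i + U i) + Z i))
          + (∑ i ∈ range (nn + 5), (m + x) ^ i
            * (x * U' i + m * (U' i + V' i) + Z' i)) := by
      intro m x
      have h0 := congrArg f (hE a b l m x)
      simp only [map_add, map_sum, map_smul, smul_eq_mul, Pi.add_apply,
        hS, hS1, hQ, hU, hW2, hZ, hU', hV', hZ'] at h0
      exact h0
    have H6 : ∀ m x : ℂ,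
        (x + l) * (∑ i ∈ range (nn + 6), x ^ i * S i)
          + m * (∑ i ∈ range (nn + 6), x ^ i * (S1 i + S i))
          + (∑ i ∈ range (nn + 6), x ^ i * Q i)
        = (∑ i ∈ range (nn + 6), (-l - m) ^ i
            * (x * U i + (l + m) * (W2 i + U i) + Z i))
          + (∑ i ∈ range (nn + 6), (m + x) ^ i
            * (x * U' i + m * (U' i + V' i) + Z' i)) := by
      intro m x
      have hv := hvan (nn + 5) (by omega)
      rw [show nn + 6 = (nn + 5) + 1 from rfl,
        Finset.sum_range_succ (fun i => x ^ i * S i) (nn + 5),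
        Finset.sum_range_succ (fun i => x ^ i * (S1 i + S i)) (nn + 5),
        Finset.sum_range_succ (fun i => x ^ i * Q i) (nn + 5),
        Finset.sum_range_succ
          (fun i => (-l - m) ^ i * (x * U i + (l + m) * (W2 i + U i) + Z i)) (nn + 5),
        Finset.sum_range_succ
          (fun i => (m + x) ^ i * (x * U' i + m * (U' i + V' i) + Z' i)) (nn + 5)]
      simp only [hv.1, hv.2.1, hv.2.2.1, hv.2.2.2.1, hv.2.2.2.2.1, hv.2.2.2.2.2.1,
        hv.2.2.2.2.2.2.1, hv.2.2.2.2.2.2.2.1, hv.2.2.2.2.2.2.2.2,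
        mul_zero, zero_mul, add_zero, zero_add]
      linear_combination H m x
    have HC : ∀ x : ℂ, ∀ j, j < nn + 7 →
        ((∑ i ∈ range (nn + 6), (i.choose j : ℂ) * l ^ (i - j)
            * ((-1 : ℂ) ^ i * (x * U i + l * (W2 i + U i) + Z i)))
          + ∑ i ∈ range (nn + 6), (i.choose j : ℂ) * x ^ (i - j) * (x * U' i + Z' i))
        + (if j = 0 then 0 else
            (∑ i ∈ range (nn + 6), (i.choose (j - 1) : ℂ) * l ^ (i - (j - 1))
              * ((-1 : ℂ) ^ i * (W2 i + U i)))
            + ∑ i ∈ range (nn + 6), (i.choose (j - 1) : ℂ) * x ^ (i - (j - 1)) * (U' i + V' i))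
        - (if j = 0 then (x + l) * (∑ i ∈ range (nn + 6), x ^ i * S i)
              + ∑ i ∈ range (nn + 6), x ^ i * Q i
           else if j = 1 then ∑ i ∈ range (nn + 6), x ^ i * (S1 i + S i) else 0) = 0 := by
      intro x
      apply ext1 (nn + 7)
      intro m
      have hb : (∑ i ∈ range (nn + 6), (i.choose (nn + 6) : ℂ) * l ^ (i - (nn + 6))
            * ((-1 : ℂ) ^ i * (x * U i + l * (W2 i + U i) + Z i)))
          + ∑ i ∈ range (nn + 6), (i.choose (nn + 6) : ℂ) * x ^ (i - (nn + 6))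
            * (x * U' i + Z' i) = 0 := by
        rw [Finset.sum_eq_zero fun i hi => by
            simp [Nat.choose_eq_zero_of_lt (Finset.mem_range.1 hi)],
          Finset.sum_eq_zero fun i hi => by
            simp [Nat.choose_eq_zero_of_lt (Finset.mem_range.1 hi)], add_zero]
      have G := gather (nn + 6) (by omega)
        (fun j => ∑ i ∈ range (nn + 6), (i.choose j : ℂ) * l ^ (i - j)
            * ((-1 : ℂ) ^ i * (x * U i + l * (W2 i + U i) + Z i)))
        (fun j => ∑ i ∈ range (nn + 6), (i.choose j : ℂ) * x ^ (i - j) * (x * U' i + Z' i))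
        (fun j => ∑ i ∈ range (nn + 6), (i.choose j : ℂ) * l ^ (i - j)
            * ((-1 : ℂ) ^ i * (W2 i + U i)))
        (fun j => ∑ i ∈ range (nn + 6), (i.choose j : ℂ) * x ^ (i - j) * (U' i + V' i))
        ((x + l) * (∑ i ∈ range (nn + 6), x ^ i * S i) + ∑ i ∈ range (nn + 6), x ^ i * Q i)
        (∑ i ∈ range (nn + 6), x ^ i * (S1 i + S i)) m hb
      rw [show nn + 7 = (nn + 6) + 1 from rfl, G]
      have R1 := sum_pow_repr (nn + 6)
        (fun i => (-1 : ℂ) ^ i * (x * U i + l * (W2 i + U i) + Z i)) l m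
      have R2 := sum_pow_repr (nn + 6) (fun i => x * U' i + Z' i) x m
      have R3 := sum_pow_repr (nn + 6) (fun i => (-1 : ℂ) ^ i * (W2 i + U i)) l m
      have R4 := sum_pow_repr (nn + 6) (fun i => U' i + V' i) x m
      have hs1 : (∑ i ∈ range (nn + 6), (-l - m) ^ i
            * (x * U i + (l + m) * (W2 i + U i) + Z i))
          = (∑ i ∈ range (nn + 6), (l + m) ^ i
              * ((-1 : ℂ) ^ i * (x * U i + l * (W2 i + U i) + Z i)))
            + m * ∑ i ∈ range (nn + 6), (l + m) ^ i * ((-1 : ℂ) ^ i * (W2 i + U i)) := by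
        rw [Finset.mul_sum, ← Finset.sum_add_distrib]
        refine Finset.sum_congr rfl fun i _ => ?_
        rw [show (-l - m : ℂ) = -(l + m) by ring, neg_pow]
        ring
      have hs2 : (∑ i ∈ range (nn + 6), (m + x) ^ i
            * (x * U' i + m * (U' i + V' i) + Z' i))
          = (∑ i ∈ range (nn + 6), (x + m) ^ i * (x * U' i + Z' i))
            + m * ∑ i ∈ range (nn + 6), (x + m) ^ i * (U' i + V' i) := by
        rw [Finset.mul_sum, ← Finset.sum_add_distrib]
        refine Finset.sum_congr rfl fun i _ => ?_
        rw [add_comm m x]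
        ring
      linear_combination (-1 : ℂ) * H6 m x - hs1 - hs2 - R1 - R2 - m * R3 - m * R4
    have HX2 : ∀ x : ℂ,
        ((∑ i ∈ range (nn + 6), (i.choose 2 : ℂ) * l ^ (i - 2)
            * ((-1 : ℂ) ^ i * (x * U i + l * (W2 i + U i) + Z i)))
          + ∑ i ∈ range (nn + 6), (i.choose 2 : ℂ) * x ^ (i - 2) * (x * U' i + Z' i))
        + ((∑ i ∈ range (nn + 6), (i : ℂ) * l ^ (i - 1)
            * ((-1 : ℂ) ^ i * (W2 i + U i)))
          + ∑ i ∈ range (nn + 6), (i : ℂ) * x ^ (i - 1) * (U' i + V' i)) = 0 := by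
      intro x
      have h := HC x 2 (by omega)
      norm_num at h
      linear_combination h
    have HX3 : ∀ x : ℂ,
        ((∑ i ∈ range (nn + 6), (i.choose 3 : ℂ) * l ^ (i - 3)
            * ((-1 : ℂ) ^ i * (x * U i + l * (W2 i + U i) + Z i)))
          + ∑ i ∈ range (nn + 6), (i.choose 3 : ℂ) * x ^ (i - 3) * (x * U' i + Z' i))
        + ((∑ i ∈ range (nn + 6), (i.choose 2 : ℂ) * l ^ (i - 2)
            * ((-1 : ℂ) ^ i * (W2 i + U i)))
          + ∑ i ∈ range (nn + 6), (i.choose 2 : ℂ) * x ^ (i - 2) * (U' i + V' i)) = 0 := by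
      intro x
      have h := HC x 3 (by omega)
      norm_num at h
      linear_combination h
    have HE2 : ∀ k, k < nn + 6 →
        ((k + 1).choose 2 : ℂ) * U' (k + 1) + ((k + 2).choose 2 : ℂ) * Z' (k + 2)
          + ((k + 1 : ℕ) : ℂ) * (U' (k + 1) + V' (k + 1))
          + (if k = 1 then ∑ i ∈ range (nn + 6), (i.choose 2 : ℂ) * l ^ (i - 2)
              * ((-1 : ℂ) ^ i * U i) else 0)
          + (if k = 0 then
              (∑ i ∈ range (nn + 6), (i.choose 2 : ℂ) * l ^ (i - 2)
                * ((-1 : ℂ) ^ i * (l * (W2 i + U i) + Z i)))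
              + ∑ i ∈ range (nn + 6), (i : ℂ) * l ^ (i - 1)
                * ((-1 : ℂ) ^ i * (W2 i + U i)) else 0) = 0 := by
      apply ext1 (nn + 6)
      intro x
      have G := gather2 (nn + 6) (by omega)
        (fun k => ((k + 1).choose 2 : ℂ) * U' (k + 1))
        (fun k => ((k + 2).choose 2 : ℂ) * Z' (k + 2))
        (fun k => ((k + 1 : ℕ) : ℂ) * (U' (k + 1) + V' (k + 1)))
        ((∑ i ∈ range (nn + 6), (i.choose 2 : ℂ) * l ^ (i - 2)
            * ((-1 : ℂ) ^ i * (l * (W2 i + U i) + Z i)))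
          + ∑ i ∈ range (nn + 6), (i : ℂ) * l ^ (i - 1)
            * ((-1 : ℂ) ^ i * (W2 i + U i)))
        (∑ i ∈ range (nn + 6), (i.choose 2 : ℂ) * l ^ (i - 2) * ((-1 : ℂ) ^ i * U i))
        x
      rw [G]
      have t1 : (∑ i ∈ range (nn + 6), (i.choose 2 : ℂ) * l ^ (i - 2)
            * ((-1 : ℂ) ^ i * (x * U i + l * (W2 i + U i) + Z i)))
          = x * (∑ i ∈ range (nn + 6), (i.choose 2 : ℂ) * l ^ (i - 2) * ((-1 : ℂ) ^ i * U i))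
            + ∑ i ∈ range (nn + 6), (i.choose 2 : ℂ) * l ^ (i - 2)
              * ((-1 : ℂ) ^ i * (l * (W2 i + U i) + Z i)) := by
        rw [Finset.mul_sum, ← Finset.sum_add_distrib]
        exact Finset.sum_congr rfl fun i _ => by ring
      have t2 : (∑ i ∈ range (nn + 6), (i.choose 2 : ℂ) * x ^ (i - 2) * (x * U' i + Z' i))
          = (∑ i ∈ range (nn + 6), ((i.choose 2 : ℂ) * U' i) * x ^ (i - 1))
            + ∑ i ∈ range (nn + 6), ((i.choose 2 : ℂ) * Z' i) * x ^ (i - 2) := by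
        rw [← Finset.sum_add_distrib]
        refine Finset.sum_congr rfl fun i _ => ?_
        rcases Nat.lt_or_ge i 2 with hi | hi
        · simp [Nat.choose_eq_zero_of_lt hi]
        · rw [show i - 1 = (i - 2) + 1 by omega, pow_succ]
          ring
      have t2a := sum_shift (nn + 6) 1 (fun i => (i.choose 2 : ℂ) * U' i)
        (fun i hi => by simp [(hvan i (by omega)).2.2.2.2.2.2.1])
        (fun i hi => by simp [Nat.choose_eq_zero_of_lt (show i < 2 by omega)]) x
      have t2b := sum_shift (nn + 6) 2 (fun i => (i.choose 2 : ℂ) * Z' i)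
        (fun i hi => by simp [(hvan i (by omega)).2.2.2.2.2.2.2.2])
        (fun i hi => by simp [Nat.choose_eq_zero_of_lt (show i < 2 by omega)]) x
      have t4 : (∑ i ∈ range (nn + 6), (i : ℂ) * x ^ (i - 1) * (U' i + V' i))
          = ∑ i ∈ range (nn + 6), ((i : ℂ) * (U' i + V' i)) * x ^ (i - 1) :=
        Finset.sum_congr rfl fun i _ => by ring
      have t4a := sum_shift (nn + 6) 1 (fun i => (i : ℂ) * (U' i + V' i))
        (fun i hi => by
          simp [(hvan i (by omega)).2.2.2.2.2.2.1, (hvan i (by omega)).2.2.2.2.2.2.2.1])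
        (fun i hi => by simp [show i = 0 by omega]) x
      linear_combination HX2 x - t1 - t2 - t4 - t2a - t2b - t4a
    have HE3 : ∀ k, k < nn + 6 →
        ((k + 2).choose 3 : ℂ) * U' (k + 2) + ((k + 3).choose 3 : ℂ) * Z' (k + 3)
          + ((k + 2).choose 2 : ℂ) * (U' (k + 2) + V' (k + 2))
          + (if k = 1 then ∑ i ∈ range (nn + 6), (i.choose 3 : ℂ) * l ^ (i - 3)
              * ((-1 : ℂ) ^ i * U i) else 0)
          + (if k = 0 then
              (∑ i ∈ range (nn + 6), (i.choose 3 : ℂ) * l ^ (i - 3)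
                * ((-1 : ℂ) ^ i * (l * (W2 i + U i) + Z i)))
              + ∑ i ∈ range (nn + 6), (i.choose 2 : ℂ) * l ^ (i - 2)
                * ((-1 : ℂ) ^ i * (W2 i + U i)) else 0) = 0 := by
      apply ext1 (nn + 6)
      intro x
      have G := gather2 (nn + 6) (by omega)
        (fun k => ((k + 2).choose 3 : ℂ) * U' (k + 2))
        (fun k => ((k + 3).choose 3 : ℂ) * Z' (k + 3))
        (fun k => ((k + 2).choose 2 : ℂ) * (U' (k + 2) + V' (k + 2)))
        ((∑ i ∈ range (nn + 6), (i.choose 3 : ℂ) * l ^ (i - 3)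
            * ((-1 : ℂ) ^ i * (l * (W2 i + U i) + Z i)))
          + ∑ i ∈ range (nn + 6), (i.choose 2 : ℂ) * l ^ (i - 2)
            * ((-1 : ℂ) ^ i * (W2 i + U i)))
        (∑ i ∈ range (nn + 6), (i.choose 3 : ℂ) * l ^ (i - 3) * ((-1 : ℂ) ^ i * U i))
        x
      rw [G]
      have t1 : (∑ i ∈ range (nn + 6), (i.choose 3 : ℂ) * l ^ (i - 3)
            * ((-1 : ℂ) ^ i * (x * U i + l * (W2 i + U i) + Z i)))
          = x * (∑ i ∈ range (nn + 6), (i.choose 3 : ℂ) * l ^ (i - 3) * ((-1 : ℂ) ^ i * U i))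
            + ∑ i ∈ range (nn + 6), (i.choose 3 : ℂ) * l ^ (i - 3)
              * ((-1 : ℂ) ^ i * (l * (W2 i + U i) + Z i)) := by
        rw [Finset.mul_sum, ← Finset.sum_add_distrib]
        exact Finset.sum_congr rfl fun i _ => by ring
      have t2 : (∑ i ∈ range (nn + 6), (i.choose 3 : ℂ) * x ^ (i - 3) * (x * U' i + Z' i))
          = (∑ i ∈ range (nn + 6), ((i.choose 3 : ℂ) * U' i) * x ^ (i - 2))
            + ∑ i ∈ range (nn + 6), ((i.choose 3 : ℂ) * Z' i) * x ^ (i - 3) := by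
        rw [← Finset.sum_add_distrib]
        refine Finset.sum_congr rfl fun i _ => ?_
        rcases Nat.lt_or_ge i 3 with hi | hi
        · simp [Nat.choose_eq_zero_of_lt hi]
        · rw [show i - 2 = (i - 3) + 1 by omega, pow_succ]
          ring
      have t2a := sum_shift (nn + 6) 2 (fun i => (i.choose 3 : ℂ) * U' i)
        (fun i hi => by simp [(hvan i (by omega)).2.2.2.2.2.2.1])
        (fun i hi => by simp [Nat.choose_eq_zero_of_lt (show i < 3 by omega)]) x
      have t2b := sum_shift (nn + 6) 3 (fun i => (i.choose 3 : ℂ) * Z' i)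
        (fun i hi => by simp [(hvan i (by omega)).2.2.2.2.2.2.2.2])
        (fun i hi => by simp [Nat.choose_eq_zero_of_lt (show i < 3 by omega)]) x
      have t4 : (∑ i ∈ range (nn + 6), (i.choose 2 : ℂ) * x ^ (i - 2) * (U' i + V' i))
          = ∑ i ∈ range (nn + 6), ((i.choose 2 : ℂ) * (U' i + V' i)) * x ^ (i - 2) :=
        Finset.sum_congr rfl fun i _ => by ring
      have t4a := sum_shift (nn + 6) 2 (fun i => (i.choose 2 : ℂ) * (U' i + V' i))
        (fun i hi => by
          simp [(hvan i (by omega)).2.2.2.2.2.2.1, (hvan i (by omega)).2.2.2.2.2.2.2.1])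
        (fun i hi => by simp [Nat.choose_eq_zero_of_lt (show i < 2 by omega)]) x
      linear_combination HX3 x - t1 - t2 - t4 - t2a - t2b - t4a
    have eqA : ((nn + 4).choose 2 : ℂ) * U' (nn + 4)
        + ((nn : ℂ) + 4) * (U' (nn + 4) + V' (nn + 4)) = 0 := by
      have h := HE2 (nn + 3) (by omega)
      rw [if_neg (by omega), if_neg (by omega)] at h
      simp only [show nn + 3 + 1 = nn + 4 by omega, show nn + 3 + 2 = nn + 5 by omega,
        (hvan (nn + 5) (by omega)).2.2.2.2.2.2.2.2, Nat.choose_one_right] at h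
      push_cast at h
      linear_combination h
    have eqB : ((nn + 4).choose 3 : ℂ) * U' (nn + 4)
        + ((nn + 4).choose 2 : ℂ) * (U' (nn + 4) + V' (nn + 4)) = 0 := by
      have h := HE3 (nn + 2) (by omega)
      rw [if_neg (by omega), if_neg (by omega)] at h
      simp only [show nn + 2 + 2 = nn + 4 by omega, show nn + 2 + 3 = nn + 5 by omega,
        (hvan (nn + 5) (by omega)).2.2.2.2.2.2.2.2] at h
      linear_combination h
    have c2nat : (nn + 4).choose 2 * 2 = (nn + 4) * (nn + 3) := by
      have h1 := Nat.choose_succ_right_eq (nn + 4) 1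
      rwa [show (1 : ℕ) + 1 = 2 from rfl, Nat.choose_one_right,
        show nn + 4 - 1 = nn + 3 by omega] at h1
    have c3nat : (nn + 4).choose 3 * 3 = (nn + 4).choose 2 * (nn + 2) := by
      have h1 := Nat.choose_succ_right_eq (nn + 4) 2
      rwa [show (2 : ℕ) + 1 = 3 from rfl, show nn + 4 - 2 = nn + 2 by omega] at h1
    have c2C := congrArg (fun t : ℕ => (t : ℂ)) c2nat
    have c3C := congrArg (fun t : ℕ => (t : ℂ)) c3nat
    push_cast at c2C c3C
    have hAB : (((nn : ℂ) + 4) * ((nn + 4).choose 3 : ℂ) - ((nn + 4).choose 2 : ℂ) ^ 2)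
        * U' (nn + 4) = 0 := by
      linear_combination ((nn : ℂ) + 4) * eqB - ((nn + 4).choose 2 : ℂ) * eqA
    have hfac : (6 : ℂ) * (((nn : ℂ) + 4) * ((nn + 4).choose 3 : ℂ)
          - ((nn + 4).choose 2 : ℂ) ^ 2)
        = -(((nn : ℂ) + 4) * ((nn : ℂ) + 5)) * ((nn + 4).choose 2 : ℂ) := by
      linear_combination 2 * ((nn : ℂ) + 4) * c3C - 3 * ((nn + 4).choose 2 : ℂ) * c2C
    have h6 : (-(((nn : ℂ) + 4) * ((nn : ℂ) + 5)) * ((nn + 4).choose 2 : ℂ))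
        * U' (nn + 4) = 0 := by
      linear_combination 6 * hAB - U' (nn + 4) * hfac
    have hn4 : ((nn : ℂ) + 4) ≠ 0 := by
      have h0 : ((nn + 4 : ℕ) : ℂ) ≠ 0 := Nat.cast_ne_zero.2 (by omega)
      push_cast at h0
      exact h0
    have hn5 : ((nn : ℂ) + 5) ≠ 0 := by
      have h0 : ((nn + 5 : ℕ) : ℂ) ≠ 0 := Nat.cast_ne_zero.2 (by omega)
      push_cast at h0
      exact h0
    have hc2ne : (((nn + 4).choose 2 : ℕ) : ℂ) ≠ 0 :=
      Nat.cast_ne_zero.2 (Nat.choose_pos (by omega)).ne'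
    have hu : U' (nn + 4) = 0 := by
      rcases mul_eq_zero.1 h6 with h | h
      · exact absurd h (mul_ne_zero (neg_ne_zero.2 (mul_ne_zero hn4 hn5)) hc2ne)
      · exact h
    have hv2 : V' (nn + 4) = 0 := by
      have h := eqA
      rw [hu] at h
      have h4 : ((nn : ℂ) + 4) * V' (nn + 4) = 0 := by linear_combination h
      rcases mul_eq_zero.1 h4 with h' | h'
      · exact absurd h' hn4
      · exact h'
    exact ⟨by rw [hU' (nn + 4)]; exact hu, by rw [hV' (nn + 4)]; exact hv2⟩
  constructor
  · exact (Module.forall_dual_apply_eq_zero_iff ℂ _).1 fun f => (key f).1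
  · exact (Module.forall_dual_apply_eq_zero_iff ℂ _).1 fun f => (key f).2
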